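/- arXiv:1711.03695 — 4 statements merged into one kernel-verified Lean document; each statement's English description precedes it below -/
import Mathlib

section
/- Let V be a connected groupoid whose objects are a set S, and let C denote the groupoid with one object whose morphism monoid is the additive group of complex numbers. Then the group of groupoid homomorphisms from V to C (under pointwise addition) is isomorphic to the group of group homomorphisms from Γ ⊕ W to C, where Γ is the automorphism group of any fixed object of V and W = { (a_j) ∈ ℤ^S : Σ a_j = 0 }. -/
open CategoryTheory

/-- The additive group of groupoid homomorphisms `Z : V → ℂ` (assignments of complex
numbers to morphisms, additive under composition), realized as an additive subgroup of
the group of all assignments under pointwise addition. -/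
noncomputable def grpdHomGroup (V : Type) [Groupoid V] :
    AddSubgroup (∀ i j : V, (i ⟶ j) → ℂ) where
  carrier := {Z | ∀ (i j k : V) (f : i ⟶ j) (g : j ⟶ k),
    Z i k (f ≫ g) = Z i j f + Z j k g}
  add_mem' := by
    intro a b ha hb i j k f g
    simp only [Pi.add_apply]
    rw [ha i j k f g, hb i j k f g]; ring
  zero_mem' := by intro i j k f g; simp
  neg_mem' := by
    intro a ha i j k f g
    simp only [Pi.neg_apply]
    rw [ha i j k f g]; ring

/-- The sum-zero sublattice `W = {a ∈ ℤ^{Ob V} : Σ a_j = 0}` of the free abelian group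
on the objects of `V`. -/
noncomputable def sumZeroW (V : Type) [Groupoid V] : AddSubgroup (V →₀ ℤ) :=
  (Finsupp.liftAddHom (M := ℤ) (N := ℤ) fun _ : V => AddMonoidHom.id ℤ).ker

namespace Stmt0Aux

noncomputable section

variable {V : Type} [Groupoid V]

lemma grpd_id (Z : grpdHomGroup V) (j : V) : Z.1 j j (𝟙 j) = 0 := by
  have h := Z.2 j j j (𝟙 j) (𝟙 j)
  simp only [Category.comp_id] at h
  exact right_eq_add.mp h

lemma grpd_inv (Z : grpdHomGroup V) {j k : V} (f : j ⟶ k) :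
    Z.1 k j (inv f) = - Z.1 j k f := by
  have h := Z.2 j k j f (inv f)
  rw [IsIso.hom_inv_id, grpd_id] at h
  exact eq_neg_of_add_eq_zero_right h.symm

/-- the element `single k 1 - single j 1` of `W`. -/
def wElt (j k : V) : sumZeroW V :=
  ⟨Finsupp.single k 1 - Finsupp.single j 1, by
    simp [sumZeroW, AddMonoidHom.mem_ker, map_sub]⟩

lemma wElt_self (j : V) : wElt j j = 0 := by
  apply Subtype.ext; simp [wElt]

variable (i : V) (φ : ∀ j : V, i ≅ j)

/-- the automorphism of `i` associated to a morphism `h : j ⟶ k`. -/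
def autElt {j k : V} (h : j ⟶ k) : Aut i := φ j ≪≫ asIso h ≪≫ (φ k).symm

lemma autElt_comp {j k l : V} (f : j ⟶ k) (g : k ⟶ l) :
    autElt i φ (f ≫ g) = autElt i φ g * autElt i φ f := by
  rw [Aut.Aut_mul_def]
  apply Iso.ext
  simp [autElt]

/-- the backward map. -/
def psi (F : (Additive (Aut i) × sumZeroW V) →+ ℂ) : grpdHomGroup V :=
  ⟨fun j k h => F (Additive.ofMul (autElt i φ h), wElt j k), by
    intro j k l f g
    have h1 : (Additive.ofMul (autElt i φ (f ≫ g)), wElt j l)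
        = (Additive.ofMul (autElt i φ g) + Additive.ofMul (autElt i φ f),
            wElt k l + wElt j k) := by
      refine Prod.ext ?_ ?_
      · show Additive.ofMul _ = Additive.ofMul _ + Additive.ofMul _
        rw [← ofMul_mul, autElt_comp]
      · apply Subtype.ext
        show (Finsupp.single l 1 - Finsupp.single j 1 : V →₀ ℤ)
          = ((wElt k l : sumZeroW V) : V →₀ ℤ) + ((wElt j k : sumZeroW V) : V →₀ ℤ)
        show (Finsupp.single l 1 - Finsupp.single j 1 : V →₀ ℤ)
          = (Finsupp.single l 1 - Finsupp.single k 1)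
            + (Finsupp.single k 1 - Finsupp.single j 1)
        abel
    show F (Additive.ofMul (autElt i φ (f ≫ g)), wElt j l)
      = F (Additive.ofMul (autElt i φ f), wElt j k)
        + F (Additive.ofMul (autElt i φ g), wElt k l)
    have h2 : (Additive.ofMul (autElt i φ g) + Additive.ofMul (autElt i φ f),
          wElt k l + wElt j k)
        = (Additive.ofMul (autElt i φ g), wElt k l)
          + (Additive.ofMul (autElt i φ f), wElt j k) := rfl
    rw [h1, h2, map_add, add_comm]⟩

/-- the forward map. -/
def phi (Z : grpdHomGroup V) : (Additive (Aut i) × sumZeroW V) →+ ℂ :=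
  (AddMonoidHom.mk' (fun γ => Z.1 i i (Additive.toMul γ).hom) (by
    intro a b
    show Z.1 i i ((Additive.toMul b).hom ≫ (Additive.toMul a).hom) = _
    exact (Z.2 i i i (Additive.toMul b).hom (Additive.toMul a).hom).trans
      (add_comm _ _))).comp (AddMonoidHom.fst _ _)
  + ((Finsupp.liftAddHom fun j => zmultiplesHom ℂ (Z.1 i j (φ j).hom)).comp
      (sumZeroW V).subtype).comp (AddMonoidHom.snd _ _)

lemma phi_apply (Z : grpdHomGroup V) (a : Additive (Aut i)) (w : sumZeroW V) :
    phi i φ Z (a, w) = Z.1 i i (Additive.toMul a).hom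
      + Finsupp.liftAddHom (fun j => zmultiplesHom ℂ (Z.1 i j (φ j).hom)) w.1 := rfl

lemma conj_fix {G : Type*} [Group G] (f : Additive G →+ ℂ) (a b : G) :
    f (Additive.ofMul (b * a * b⁻¹)) = f (Additive.ofMul a) := by
  rw [ofMul_mul, ofMul_mul, ofMul_inv, map_add, map_add, map_neg]
  ring

lemma left_inv (Z : grpdHomGroup V) : psi i φ (phi i φ Z) = Z := by
  apply Subtype.ext
  funext j k h
  show phi i φ Z (Additive.ofMul (autElt i φ h), wElt j k) = Z.1 j k h
  rw [phi_apply]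
  have e1 : (Additive.toMul (Additive.ofMul (autElt i φ h))).hom
      = (φ j).hom ≫ h ≫ (φ k).inv := by
    show (autElt i φ h).hom = _
    simp [autElt]
  rw [e1]
  have h1 := Z.2 i j i (φ j).hom (h ≫ (φ k).inv)
  have h2 := Z.2 j k i h (φ k).inv
  have h3 : (φ k).inv = inv (φ k).hom := by simp
  have h4 : Z.1 k i (φ k).inv = - Z.1 i k (φ k).hom := by
    rw [h3]; exact grpd_inv Z _
  have h5 : (Finsupp.liftAddHom fun j' => zmultiplesHom ℂ (Z.1 i j' (φ j').hom))
      ((wElt j k : sumZeroW V) : V →₀ ℤ)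
      = Z.1 i k (φ k).hom - Z.1 i j (φ j).hom := by
    show (Finsupp.liftAddHom _) (Finsupp.single k 1 - Finsupp.single j 1) = _
    rw [map_sub, Finsupp.liftAddHom_apply_single, Finsupp.liftAddHom_apply_single]
    simp
  rw [h1, h2, h4, h5]
  ring

lemma right_inv (F : (Additive (Aut i) × sumZeroW V) →+ ℂ) :
    phi i φ (psi i φ F) = F := by
  have hA : ∀ a : Additive (Aut i), phi i φ (psi i φ F) (a, 0) = F (a, 0) := by
    intro a
    rw [phi_apply]
    have hz : ((0 : sumZeroW V) : V →₀ ℤ) = 0 := rfl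
    rw [hz, map_zero, add_zero]
    show F (Additive.ofMul (autElt i φ (Additive.toMul a).hom), wElt i i) = _
    rw [wElt_self]
    let b : Aut i := (φ i).symm
    have e : autElt i φ (Additive.toMul a).hom
        = b * Additive.toMul a * b⁻¹ := by
      apply Iso.ext
      show (autElt i φ (Additive.toMul a).hom).hom
        = (b * Additive.toMul a * b⁻¹).hom
      change _ = (φ i).hom ≫ (Additive.toMul a).hom ≫ (φ i).inv
      simp [autElt, b]
    rw [e]
    have := conj_fix (F.comp (AddMonoidHom.inl (Additive (Aut i)) (sumZeroW V)))
      (Additive.toMul a) b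
    simpa using this
  have hW : ∀ w : sumZeroW V, phi i φ (psi i φ F) (0, w) = F (0, w) := by
    have hρmem : ∀ u : V →₀ ℤ,
        (u - (Finsupp.liftAddHom (M := ℤ) (N := ℤ) fun _ : V => AddMonoidHom.id ℤ) u
          • Finsupp.single i 1) ∈ sumZeroW V := by
      intro u
      simp [sumZeroW, AddMonoidHom.mem_ker, map_sub, map_zsmul]
    set ρ : (V →₀ ℤ) →+ sumZeroW V :=
      { toFun := fun u => ⟨_, hρmem u⟩
        map_zero' := by apply Subtype.ext; simp
        map_add' := by
          intro u v; apply Subtype.ext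
          show u + v - _ • Finsupp.single i 1
            = (u - _ • Finsupp.single i 1) + (v - _ • Finsupp.single i 1)
          rw [map_add, add_smul]
          abel } with hρ
    have key : ((phi i φ (psi i φ F)).comp
          ((AddMonoidHom.inr (Additive (Aut i)) (sumZeroW V)).comp ρ))
        = F.comp ((AddMonoidHom.inr (Additive (Aut i)) (sumZeroW V)).comp ρ) := by
      ext j
      show phi i φ (psi i φ F) (0, ρ (Finsupp.single j 1))
        = F (0, ρ (Finsupp.single j 1))
      have hρs : ρ (Finsupp.single j 1) = wElt i j := by
        apply Subtype.ext
        show Finsupp.single j 1 - _ • Finsupp.single i 1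
          = ((wElt i j : sumZeroW V) : V →₀ ℤ)
        rw [Finsupp.liftAddHom_apply_single]
        show Finsupp.single j 1 - (1 : ℤ) • Finsupp.single i 1
          = Finsupp.single j 1 - Finsupp.single i 1
        rw [one_smul]
      rw [hρs, phi_apply]
      have h0 : (psi i φ F).1 i i (Additive.toMul (0 : Additive (Aut i))).hom = 0 := by
        have h00 : (Additive.toMul (0 : Additive (Aut i))).hom = 𝟙 i := rfl
        rw [h00]; exact grpd_id _ i
      rw [h0, zero_add]
      have h5 : (Finsupp.liftAddHom fun j' => zmultiplesHom ℂ ((psi i φ F).1 i j' (φ j').hom))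
          ((wElt i j : sumZeroW V) : V →₀ ℤ)
          = (psi i φ F).1 i j (φ j).hom - (psi i φ F).1 i i (φ i).hom := by
        show (Finsupp.liftAddHom _) (Finsupp.single j 1 - Finsupp.single i 1) = _
        rw [map_sub, Finsupp.liftAddHom_apply_single, Finsupp.liftAddHom_apply_single]
        simp
      rw [h5]
      show F (Additive.ofMul (autElt i φ (φ j).hom), wElt i j)
          - F (Additive.ofMul (autElt i φ (φ i).hom), wElt i i) = F (0, wElt i j)
      have e1 : autElt i φ (φ j).hom = autElt i φ (φ i).hom := by
        apply Iso.ext; simp [autElt]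
      rw [e1, wElt_self]
      have hsplit : (Additive.ofMul (autElt i φ (φ i).hom), wElt i j)
          = (Additive.ofMul (autElt i φ (φ i).hom), (0 : sumZeroW V))
            + ((0 : Additive (Aut i)), wElt i j) := by
        refine Prod.ext ?_ ?_ <;> simp
      rw [hsplit, map_add]
      ring
    intro w
    have hw : ρ (w : V →₀ ℤ) = w := by
      apply Subtype.ext
      have hmem : (Finsupp.liftAddHom (M := ℤ) (N := ℤ)
          fun _ : V => AddMonoidHom.id ℤ) (w : V →₀ ℤ) = 0 := w.2
      show (w : V →₀ ℤ) - _ • Finsupp.single i 1 = _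
      rw [hmem]; simp
    have := DFunLike.congr_fun key (w : V →₀ ℤ)
    simpa [hw] using this
  ext1 p
  obtain ⟨a, w⟩ := p
  have hsplit : (a, w) = ((a, 0) : Additive (Aut i) × sumZeroW V) + (0, w) := by
    refine Prod.ext ?_ ?_ <;> simp
  rw [hsplit, map_add, map_add, hA a, hW w]

omit [Groupoid V] in
lemma lift_add (c c' : V → ℂ) (u : V →₀ ℤ) :
    Finsupp.liftAddHom (fun j => zmultiplesHom ℂ (c j + c' j)) u
      = Finsupp.liftAddHom (fun j => zmultiplesHom ℂ (c j)) u
        + Finsupp.liftAddHom (fun j => zmultiplesHom ℂ (c' j)) u := by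
  induction u using Finsupp.induction_linear with
  | zero => simp
  | add f g hf hg => rw [map_add, map_add, map_add, hf, hg]; ring
  | single a b =>
      rw [Finsupp.liftAddHom_apply_single, Finsupp.liftAddHom_apply_single,
        Finsupp.liftAddHom_apply_single]
      simp [smul_add]

end

end Stmt0Aux

/-- for a connected groupoid `V`, the group of groupoid homomorphisms
`V → ℂ` (under pointwise addition) is isomorphic to the group of group homomorphisms
`Γ ⊕ W → ℂ`, where `Γ = Aut(i)` is the automorphism group of any fixed object `i` and
`W = {a ∈ ℤ^{Ob V} : Σ a_j = 0}`. -/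
theorem stmt0 (V : Type) [Groupoid V]
    (hconn : ∀ i j : V, Nonempty (i ≅ j)) (i : V) :
    Nonempty ((grpdHomGroup V) ≃+
      ((Additive (Aut i) × (sumZeroW V)) →+ ℂ)) := by
  have φ : ∀ j : V, i ≅ j := fun j => (hconn i j).some
  exact ⟨{ toFun := Stmt0Aux.phi i φ
           invFun := Stmt0Aux.psi i φ
           left_inv := Stmt0Aux.left_inv i φ
           right_inv := Stmt0Aux.right_inv i φ
           map_add' := by
             intro Z Z'
             ext1 p
             obtain ⟨a, w⟩ := p
             show Stmt0Aux.phi i φ (Z + Z') (a, w)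
               = Stmt0Aux.phi i φ Z (a, w) + Stmt0Aux.phi i φ Z' (a, w)
             rw [Stmt0Aux.phi_apply, Stmt0Aux.phi_apply, Stmt0Aux.phi_apply]
             show (Z.1 i i (Additive.toMul a).hom + Z'.1 i i (Additive.toMul a).hom)
                 + Finsupp.liftAddHom (fun j => zmultiplesHom ℂ
                     (Z.1 i j (φ j).hom + Z'.1 i j (φ j).hom)) w.1 = _
             rw [Stmt0Aux.lift_add]
             ring }⟩
end

section
/- For the A_n quiver, every indecomposable finite-dimensional representation is isomorphic to an interval module M_{ij} for some 0 ≤ i < j ≤ n; consequently the dimension vectors of indecomposables are exactly the positive roots u_{ij} = e_{i+1} + ⋯ + e_j of the type A_n root system. -/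
/-- The one-dimensional space `K` if `P` holds, else `0`, as a submodule of `K`. -/
def Vsp (K : Type) [Field K] (P : Prop) : Submodule K K where
  carrier := {x | ¬P → x = 0}
  add_mem' := fun {a b} ha hb h => by rw [ha h, hb h, add_zero]
  zero_mem' := fun _ => rfl
  smul_mem' := fun c {x} hx h => by rw [hx h, smul_zero]

lemma mem_Vsp (K : Type) [Field K] (P : Prop) (x : K) :
    x ∈ Vsp K P ↔ (¬P → x = 0) := Iff.rfl

/-- The vector space of the interval module `M_{ij}` at vertex `m`. -/
abbrev ispace (K : Type) [Field K] (i j m : ℕ) : Submodule K K :=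
  Vsp K (i < m ∧ m ≤ j)

noncomputable section
open scoped Classical

/-- The structure map `(M_{ij})_{m+1} → (M_{ij})_m`. -/
def imap (K : Type) [Field K] (i j m : ℕ) :
    ispace K i j (m + 1) →ₗ[K] ispace K i j m :=
  if h : (i < m ∧ m ≤ j) ∧ (i < m + 1 ∧ m + 1 ≤ j) then
    LinearMap.codRestrict (ispace K i j m) ((ispace K i j (m + 1)).subtype)
      (fun _ => (mem_Vsp K _ _).mpr (fun hn => absurd h.1 hn))
  else 0

/-- A representation of the `A_n` quiver (vertices `1, …, n`, arrows `m+1 → m`):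
vector spaces `V m` (trivial for `m = 0` and `m > n`) and structure maps
`f m : V (m+1) → V m`. -/
structure ARep (K : Type) [Field K] (n : ℕ) where
  V : ℕ → Type
  [acg : ∀ m, AddCommGroup (V m)]
  [mod : ∀ m, Module K (V m)]
  f : ∀ m, V (m + 1) →ₗ[K] V m
  small : ∀ m, m = 0 ∨ n < m → Subsingleton (V m)

attribute [instance] ARep.acg ARep.mod

/-- Direct sum of two representations. -/
def ARep.dsum {K : Type} [Field K] {n : ℕ} (M N : ARep K n) : ARep K n where
  V := fun m => M.V m × N.V m
  f := fun m => LinearMap.prodMap (M.f m) (N.f m)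
  small := fun m hm => by
    have h1 := M.small m hm
    have h2 := N.small m hm
    exact ⟨fun a b => Prod.ext (Subsingleton.elim _ _) (Subsingleton.elim _ _)⟩

/-- The interval module `M_{ij}` as a representation. -/
def intervalRep (K : Type) [Field K] (n i j : ℕ) (hj : j ≤ n) : ARep K n where
  V := fun m => ispace K i j m
  f := fun m => imap K i j m
  small := fun m hm =>
    ⟨fun a b => Subtype.ext (by
      have hp : ¬(i < m ∧ m ≤ j) := by rcases hm with h | h <;> omega
      rw [(mem_Vsp K _ _).mp a.2 hp, (mem_Vsp K _ _).mp b.2 hp])⟩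

/-- Isomorphism of representations. -/
def RepIso {K : Type} [Field K] {n : ℕ} (M N : ARep K n) : Prop :=
  ∃ e : ∀ m, M.V m ≃ₗ[K] N.V m, ∀ m x, e m (M.f m x) = N.f m (e (m + 1) x)

/-- A representation is indecomposable if it is nonzero and any decomposition as a
direct sum has a trivial summand. -/
def Indec {K : Type} [Field K] {n : ℕ} (M : ARep K n) : Prop :=
  (∃ m, Nontrivial (M.V m)) ∧
    ∀ N P : ARep K n, RepIso M (N.dsum P) →
      (∀ m, Subsingleton (N.V m)) ∨ (∀ m, Subsingleton (P.V m))


lemma Vsp_eq_top (K : Type) [Field K] {P : Prop} (hP : P) : Vsp K P = ⊤ := by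
  ext x; simp [mem_Vsp, hP]

lemma Vsp_eq_bot (K : Type) [Field K] {P : Prop} (hP : ¬P) : Vsp K P = ⊥ := by
  ext x; rw [mem_Vsp, Submodule.mem_bot]; simp [hP]

lemma finrank_Vsp (K : Type) [Field K] (P : Prop) :
    Module.finrank K (Vsp K P) = if P then 1 else 0 := by
  by_cases h : P
  · rw [Vsp_eq_top K h, if_pos h, finrank_top, Module.finrank_self]
  · rw [Vsp_eq_bot K h, if_neg h, finrank_bot]

/-- Module.Basis exchange: replace the `k₀`-th basis vector by any vector whose
`k₀`-coordinate is nonzero. -/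
lemma basis_update {K : Type} [Field K] {V : Type} [AddCommGroup V] [Module K V]
    {ι : Type} (B : Module.Basis ι K V) (u : V) (k₀ : ι) (h : B.repr u k₀ ≠ 0) :
    ∃ B' : Module.Basis ι K V, B' k₀ = u ∧ ∀ k, k ≠ k₀ → B' k = B k := by
  classical
  set c : K := B.repr u k₀ with hc
  have hc0 : c ≠ 0 := h
  set w : V := u - B k₀ with hw
  have hcw : B.repr w k₀ = c - 1 := by
    simp [hw, map_sub, Module.Basis.repr_self, Finsupp.single_eq_same]
    rfl
  set g : V →ₗ[K] V := LinearMap.id + LinearMap.smulRight (B.coord k₀) w with hg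
  set gi : V →ₗ[K] V := LinearMap.id - LinearMap.smulRight (c⁻¹ • B.coord k₀) w with hgi
  have hgv : ∀ v : V, g v = v + B.repr v k₀ • w := fun v => rfl
  have hgiv : ∀ v : V, gi v = v - (c⁻¹ * B.repr v k₀) • w := by
    intro v
    simp [hgi, LinearMap.sub_apply, LinearMap.smulRight_apply, smul_smul]
  have h1 : ∀ v, gi (g v) = v := by
    intro v
    set r : K := B.repr v k₀ with hr
    have hgr : B.repr (g v) k₀ = r * c := by
      rw [hgv, map_add, map_smul]
      simp only [Finsupp.add_apply, Finsupp.smul_apply, hcw, smul_eq_mul, ← hr]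
      ring
    rw [hgiv, hgr, hgv, ← hr]
    have : c⁻¹ * (r * c) = r := by field_simp
    rw [this]
    abel
  have h2 : ∀ v, g (gi v) = v := by
    intro v
    set r : K := B.repr v k₀ with hr
    have hgr : B.repr (gi v) k₀ = c⁻¹ * r := by
      rw [hgiv, map_sub, map_smul]
      simp only [Finsupp.sub_apply, Finsupp.smul_apply, hcw, smul_eq_mul, ← hr]
      field_simp
      ring
    rw [hgv, hgr, hgiv, ← hr]
    abel
  set e : V ≃ₗ[K] V := LinearEquiv.ofLinear g gi
    (by ext v; exact h2 v) (by ext v; exact h1 v) with he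
  refine ⟨B.map e, ?_, ?_⟩
  · rw [Module.Basis.map_apply]
    show g (B k₀) = u
    rw [hgv, Module.Basis.repr_self, Finsupp.single_eq_same, one_smul, hw]
    abel
  · intro k hk
    rw [Module.Basis.map_apply]
    show g (B k) = B k
    rw [hgv, Module.Basis.repr_self]
    simp [Finsupp.single_apply, hk]

/-! ### Interval bases -/

variable {K : Type} [Field K] {n : ℕ}

/-- An interval basis for the levels `≤ b` of a representation `M`. -/
structure IB (M : ARep K n) (b : ℕ) where
  ι : Type
  [fin : Fintype ι]
  i : ι → ℕ
  j : ι → ℕ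
  x : ι → ∀ m, M.V m
  hij : ∀ k, i k < j k
  hjb : ∀ k, j k ≤ b
  chain : ∀ k m, i k < m → m < j k → M.f m (x k (m + 1)) = x k m
  dies : ∀ k, M.f (i k) (x k (i k + 1)) = 0
  indep : ∀ m, LinearIndependent K (fun k : {k : ι // i k < m ∧ m ≤ j k} => x k.1 m)
  spans : ∀ m, m ≤ b → Submodule.span K
    (Set.range (fun k : {k : ι // i k < m ∧ m ≤ j k} => x k.1 m)) = ⊤

attribute [instance] IB.fin

variable {M : ARep K n} {b : ℕ}

/-- The basis of level `m` given by an interval basis. -/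
def IB.bas (L : IB M b) (m : ℕ) (hm : m ≤ b) :
    Module.Basis {k : L.ι // L.i k < m ∧ m ≤ L.j k} K (M.V m) :=
  Module.Basis.mk (L.indep m) (by rw [L.spans m hm])

lemma IB.bas_apply (L : IB M b) (m : ℕ) (hm : m ≤ b) (k : {k : L.ι // L.i k < m ∧ m ≤ L.j k}) :
    L.bas m hm k = L.x k.1 m := by
  rw [IB.bas, Module.Basis.coe_mk]

/-- The vector at level `m` obtained from coefficients `c` on the intervals. -/
def IB.Y (L : IB M b) (c : L.ι → K) (m : ℕ) : M.V m :=
  ∑ k, if L.i k < m then c k • L.x k m else 0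

lemma IB.Y_chain (L : IB M b) (c : L.ι → K)
    (hsupp : ∀ k, c k ≠ 0 → L.j k = b) (m : ℕ) (hmb : m < b) :
    M.f m (L.Y c (m + 1)) = L.Y c m := by
  rw [IB.Y, IB.Y, map_sum]
  refine Finset.sum_congr rfl (fun k _ => ?_)
  by_cases hck : c k = 0
  · simp [hck]
  have hjk : L.j k = b := hsupp k hck
  by_cases h1 : L.i k < m
  · rw [if_pos (by omega : L.i k < m + 1), if_pos h1, map_smul,
      L.chain k m h1 (by omega)]
  · rw [if_neg h1]
    by_cases h2 : L.i k < m + 1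
    · have : L.i k = m := by omega
      subst this
      rw [if_pos h2, map_smul, L.dies k, smul_zero]
    · rw [if_neg h2, map_zero]

lemma IB.Y_dies (L : IB M b) (c : L.ι → K) (k₀ : L.ι)
    (hmin : ∀ k, c k ≠ 0 → L.i k₀ ≤ L.i k) :
    M.f (L.i k₀) (L.Y c (L.i k₀ + 1)) = 0 := by
  rw [IB.Y, map_sum]
  refine Finset.sum_eq_zero (fun k _ => ?_)
  by_cases hck : c k = 0
  · simp [hck]
  by_cases h1 : L.i k < L.i k₀ + 1
  · have : L.i k = L.i k₀ := le_antisymm (by omega) (hmin k hck)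
    rw [if_pos h1, map_smul, ← this, L.dies k, smul_zero]
  · rw [if_neg h1, map_zero]

lemma IB.Y_eq_sum_subtype (L : IB M b) (c : L.ι → K) (m : ℕ)
    (hsupp : ∀ k, c k ≠ 0 → m ≤ L.j k) :
    L.Y c m = ∑ k' : {k : L.ι // L.i k < m ∧ m ≤ L.j k}, c k'.1 • L.x k'.1 m := by
  classical
  rw [IB.Y]
  have step1 : ∀ k : L.ι, (if L.i k < m then c k • L.x k m else 0)
      = (if L.i k < m ∧ m ≤ L.j k then c k • L.x k m else 0) := by
    intro k
    by_cases h1 : L.i k < m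
    · by_cases h2 : m ≤ L.j k
      · rw [if_pos h1, if_pos ⟨h1, h2⟩]
      · have : c k = 0 := by by_contra hc; exact h2 (hsupp k hc)
        simp [this]
    · rw [if_neg h1, if_neg (fun h => h1 h.1)]
  rw [Finset.sum_congr rfl (fun k _ => step1 k), ← Finset.sum_filter]
  exact Finset.sum_subtype (p := fun k => L.i k < m ∧ m ≤ L.j k)
    (Finset.univ.filter (fun k => L.i k < m ∧ m ≤ L.j k))
    (by intro x; simp) (fun k => c k • L.x k m)

lemma IB.Y_repr (L : IB M b) (c : L.ι → K) (m : ℕ) (hm : m ≤ b)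
    (hsupp : ∀ k, c k ≠ 0 → m ≤ L.j k)
    (k₀ : L.ι) (h₀ : L.i k₀ < m ∧ m ≤ L.j k₀) :
    (L.bas m hm).repr (L.Y c m) ⟨k₀, h₀⟩ = c k₀ := by
  classical
  rw [L.Y_eq_sum_subtype c m hsupp]
  have : ∀ k' : {k : L.ι // L.i k < m ∧ m ≤ L.j k},
      c k'.1 • L.x k'.1 m = c k'.1 • (L.bas m hm) k' := by
    intro k'; rw [L.bas_apply m hm k']
  rw [Finset.sum_congr rfl (fun k' _ => this k'), map_sum]
  simp only [map_smul, Module.Basis.repr_self, Finsupp.smul_single, smul_eq_mul, mul_one]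
  rw [Finsupp.finset_sum_apply]
  rw [Finset.sum_eq_single (⟨k₀, h₀⟩ : {k : L.ι // L.i k < m ∧ m ≤ L.j k})]
  · rw [Finsupp.single_eq_same]
  · intro k' _ hne
    rw [Finsupp.single_apply, if_neg (fun h => hne h)]
  · intro h; exact absurd (Finset.mem_univ _) h

/-- The key exchange lemma: given an interval basis up to `b` and a linearly
independent family in level `b`, we can modify the interval basis so that the span
of the family is spanned by distinct interval basis vectors at level `b`. -/
lemma exists_matching (M : ARep K n) (b : ℕ) :
    ∀ (r : ℕ) (v : Fin r → M.V b), LinearIndependent K v → ∀ L : IB M b,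
    ∃ (L' : IB M b) (σ : Fin r → L'.ι), Function.Injective σ ∧
      (∀ t, L'.i (σ t) < b ∧ b ≤ L'.j (σ t)) ∧
      (∀ t, L'.x (σ t) b ∈ Submodule.span K (Set.range v)) := by
  intro r
  induction r with
  | zero =>
    intro v _ L
    exact ⟨L, Fin.elim0, fun t => t.elim0, fun t => t.elim0, fun t => t.elim0⟩
  | succ r ih =>
    intro v hv L
    have hv2 : LinearIndependent K (Fin.cons (v 0) (Fin.tail v)) := by
      rw [Fin.cons_self_tail]; exact hv
    have hv' := linearIndependent_fin_cons.mp hv2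
    obtain ⟨L', σ₀, hinj₀, hin₀, hmem₀⟩ := ih (Fin.tail v) hv'.1 L
    set B := L'.bas b le_rfl with hB
    set τ : Fin r → {k : L'.ι // L'.i k < b ∧ b ≤ L'.j k} := fun t => ⟨σ₀ t, hin₀ t⟩ with hτ
    have hτinj : Function.Injective τ := fun a b h => hinj₀ (congrArg Subtype.val h)
    have htail_sub : Submodule.span K (Set.range (Fin.tail v)) ≤
        Submodule.span K (Set.range v) := by
      apply Submodule.span_mono
      rintro _ ⟨t, rfl⟩
      exact ⟨t.succ, rfl⟩
    set u : M.V b := v 0 with hu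
    set u' : M.V b := u - ∑ t, (B.repr u (τ t)) • L'.x (σ₀ t) b with hu'
    have hmemu' : u' ∈ Submodule.span K (Set.range v) := by
      apply Submodule.sub_mem
      · exact Submodule.subset_span ⟨0, rfl⟩
      · exact Submodule.sum_mem _ (fun t _ =>
          Submodule.smul_mem _ _ (htail_sub (hmem₀ t)))
    have hu'0 : u' ≠ 0 := by
      intro h0
      apply hv'.2
      have h2 : u = ∑ t, (B.repr u (τ t)) • L'.x (σ₀ t) b := by
        rw [← sub_eq_zero]; exact h0
      rw [h2]
      exact Submodule.sum_mem _ (fun t _ => Submodule.smul_mem _ _ (hmem₀ t))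
    have hvanish : ∀ s, B.repr u' (τ s) = 0 := by
      intro s
      rw [hu', map_sub, map_sum, Finsupp.sub_apply, Finsupp.coe_finset_sum,
        Finset.sum_apply]
      have : ∀ t, ((B.repr ((B.repr u (τ t)) • L'.x (σ₀ t) b)) (τ s))
          = (B.repr u (τ t)) * (if τ t = τ s then 1 else 0) := by
        intro t
        rw [map_smul]
        have hxB : L'.x (σ₀ t) b = B (τ t) := (L'.bas_apply b le_rfl (τ t)).symm
        rw [hxB, Module.Basis.repr_self, Finsupp.smul_apply, Finsupp.single_apply, smul_eq_mul]
      rw [Finset.sum_congr rfl (fun t _ => this t)]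
      rw [Finset.sum_eq_single s]
      · simp
      · intro t _ hts
        rw [if_neg (fun h => hts (hτinj h)), mul_zero]
      · intro h; exact absurd (Finset.mem_univ _) h
    have hg0 : B.repr u' ≠ 0 := fun h => hu'0 (by
      have := congrArg (B.repr.symm) h
      simpa using this)
    obtain ⟨k₀', hk₀mem, hk₀min⟩ := Finset.exists_min_image (B.repr u').support
      (fun k' => L'.i k'.1) (Finsupp.support_nonempty_iff.mpr hg0)
    set c : L'.ι → K := fun k => if h : L'.i k < b ∧ b ≤ L'.j k
      then B.repr u' ⟨k, h⟩ else 0 with hcdef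
    have hck₀ : c k₀'.1 ≠ 0 := by
      simp only [hcdef]
      simp only [dif_pos k₀'.2, Subtype.eta]
      exact Finsupp.mem_support_iff.mp hk₀mem
    have hcsupp : ∀ k, c k ≠ 0 → L'.j k = b := by
      intro k hk
      simp only [hcdef] at hk
      by_cases h : L'.i k < b ∧ b ≤ L'.j k
      · exact le_antisymm (L'.hjb k) h.2
      · rw [dif_neg h] at hk; exact absurd rfl hk
    have hcb : ∀ k, c k ≠ 0 → b ≤ L'.j k := fun k hk => le_of_eq (hcsupp k hk).symm
    have hmin' : ∀ k, c k ≠ 0 → L'.i k₀'.1 ≤ L'.i k := by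
      intro k hk
      simp only [hcdef] at hk
      by_cases h : L'.i k < b ∧ b ≤ L'.j k
      · rw [dif_pos h] at hk
        exact hk₀min ⟨k, h⟩ (Finsupp.mem_support_iff.mpr hk)
      · rw [dif_neg h] at hk; exact absurd rfl hk
    have hcτ : ∀ t, c (σ₀ t) = 0 := by
      intro t
      simp only [hcdef]
      rw [dif_pos (hin₀ t)]
      exact hvanish t
    have hYb : L'.Y c b = u' := by
      rw [L'.Y_eq_sum_subtype c b hcb]
      have : ∀ k' : {k : L'.ι // L'.i k < b ∧ b ≤ L'.j k},
          c k'.1 • L'.x k'.1 b = (B.repr u') k' • B k' := by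
        intro k'
        simp only [hcdef]
        simp only [dif_pos k'.2, Subtype.eta]
        rw [L'.bas_apply b le_rfl k']
      rw [Finset.sum_congr rfl (fun k' _ => this k')]
      exact B.sum_repr u'
    set k₀ : L'.ι := k₀'.1 with hk₀def
    have hjk₀ : L'.j k₀ = b := le_antisymm (L'.hjb _) k₀'.2.2
    set x'' : L'.ι → ∀ m, M.V m := fun k => if k = k₀ then L'.Y c else L'.x k with hx''
    have hxx : ∀ k, k ≠ k₀ → x'' k = L'.x k := fun k hk => by
      simp only [hx'', if_neg hk]
    have hxk₀ : x'' k₀ = L'.Y c := by simp only [hx'', if_pos rfl]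
    have hchain : ∀ k m, L'.i k < m → m < L'.j k → M.f m (x'' k (m + 1)) = x'' k m := by
      intro k m h1 h2
      by_cases hk : k = k₀
      · subst hk
        rw [hxk₀]
        exact L'.Y_chain c hcsupp m (by rw [hjk₀] at h2; exact h2)
      · rw [hxx k hk]; exact L'.chain k m h1 h2
    have hdies : ∀ k, M.f (L'.i k) (x'' k (L'.i k + 1)) = 0 := by
      intro k
      by_cases hk : k = k₀
      · subst hk; rw [hxk₀]; exact L'.Y_dies c k₀ hmin'
      · rw [hxx k hk]; exact L'.dies k
    have hfam : ∀ m : ℕ, ¬(L'.i k₀ < m ∧ m ≤ b) →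
        (fun k' : {k : L'.ι // L'.i k < m ∧ m ≤ L'.j k} => x'' k'.1 m)
          = (fun k' : {k : L'.ι // L'.i k < m ∧ m ≤ L'.j k} => L'.x k'.1 m) := by
      intro m hm
      funext k'
      have hne : k'.1 ≠ k₀ := by
        intro he
        exact hm ⟨he ▸ k'.2.1, le_trans (he ▸ k'.2.2) (le_of_eq hjk₀)⟩
      rw [hxx _ hne]
    have hbasnew : ∀ m (hm : m ≤ b), L'.i k₀ < m →
        ∃ B' : Module.Basis {k : L'.ι // L'.i k < m ∧ m ≤ L'.j k} K (M.V m),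
          (fun k' : {k : L'.ι // L'.i k < m ∧ m ≤ L'.j k} => x'' k'.1 m) = ⇑B' := by
      intro m hm h0m
      have h₀m : L'.i k₀ < m ∧ m ≤ L'.j k₀ := ⟨h0m, by rw [hjk₀]; exact hm⟩
      have hr : (L'.bas m hm).repr (L'.Y c m) ⟨k₀, h₀m⟩ = c k₀ :=
        L'.Y_repr c m hm (fun k hk => le_trans hm (hcb k hk)) k₀ h₀m
      obtain ⟨B', hB'1, hB'2⟩ := basis_update (L'.bas m hm) (L'.Y c m) ⟨k₀, h₀m⟩
        (by rw [hr]; exact hck₀)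
      refine ⟨B', funext (fun k' => ?_)⟩
      by_cases hk : k'.1 = k₀
      · have he : k' = ⟨k₀, h₀m⟩ := Subtype.ext hk
        rw [he, hB'1]
        show x'' k₀ m = _
        rw [hxk₀]
      · rw [hxx _ hk, hB'2 k' (fun he => hk (congrArg Subtype.val he)),
          L'.bas_apply m hm k']
    have hindep : ∀ m, LinearIndependent K
        (fun k' : {k : L'.ι // L'.i k < m ∧ m ≤ L'.j k} => x'' k'.1 m) := by
      intro m
      by_cases hm : L'.i k₀ < m ∧ m ≤ b
      · obtain ⟨B', hB'⟩ := hbasnew m hm.2 hm.1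
        rw [hB']
        exact B'.linearIndependent
      · rw [hfam m hm]
        exact L'.indep m
    have hspans : ∀ m, m ≤ b → Submodule.span K (Set.range
        (fun k' : {k : L'.ι // L'.i k < m ∧ m ≤ L'.j k} => x'' k'.1 m)) = ⊤ := by
      intro m hm
      by_cases h0m : L'.i k₀ < m
      · obtain ⟨B', hB'⟩ := hbasnew m hm h0m
        rw [hB']
        exact B'.span_eq
      · rw [hfam m (fun h => h0m h.1)]
        exact L'.spans m hm
    refine ⟨⟨L'.ι, L'.i, L'.j, x'', L'.hij, L'.hjb, hchain, hdies, hindep, hspans⟩,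
      Fin.cons k₀ σ₀, ?_, ?_, ?_⟩
    · rw [Fin.cons_injective_iff]
      refine ⟨?_, hinj₀⟩
      rintro ⟨t, ht⟩
      exact hck₀ (by rw [← hk₀def, ← ht] at *; exact hcτ t)
    · intro t
      refine Fin.cases ?_ ?_ t
      · simpa using k₀'.2
      · intro s
        simpa using hin₀ s
    · intro t
      refine Fin.cases ?_ ?_ t
      · show x'' (Fin.cons (α := fun _ => L'.ι) k₀ σ₀ 0) b ∈ Submodule.span K (Set.range v)
        rw [Fin.cons_zero, hxk₀, hYb]
        exact hmemu'
      · intro s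
        show x'' (Fin.cons (α := fun _ => L'.ι) k₀ σ₀ s.succ) b ∈ Submodule.span K (Set.range v)
        rw [Fin.cons_succ]
        have hne : σ₀ s ≠ k₀ := fun he => hck₀ (he ▸ hcτ s)
        rw [hxx _ hne]
        exact htail_sub (hmem₀ s)

/-- Place a vector of level `a` as a dependent family over all levels (zero elsewhere). -/
def place {M : ARep K n} {a : ℕ} (v : M.V a) : ∀ m, M.V m :=
  fun m => if h : m = a then h.symm ▸ v else 0

lemma place_self {M : ARep K n} {a : ℕ} (v : M.V a) : place v a = v := by
  simp [place]

lemma place_ne {M : ARep K n} {a : ℕ} (v : M.V a) {m : ℕ} (h : m ≠ a) : place v m = 0 := by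
  simp [place, h]

lemma exists_IB (M : ARep K n) (hfd : ∀ m, FiniteDimensional K (M.V m)) (b : ℕ) :
    Nonempty (IB M b) := by
  induction b with
  | zero =>
    haveI : Subsingleton (M.V 0) := M.small 0 (Or.inl rfl)
    refine ⟨⟨PEmpty, fun k => k.elim, fun k => k.elim, fun k => k.elim,
      fun k => k.elim, fun k => k.elim, fun k => k.elim, fun k => k.elim, ?_, ?_⟩⟩
    · intro m
      haveI : IsEmpty {k : PEmpty // (k.elim : ℕ) < m ∧ m ≤ k.elim} := ⟨fun k => k.1.elim⟩
      exact linearIndependent_empty_type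
    · intro m hm
      have hm0 : m = 0 := Nat.le_zero.mp hm
      subst hm0
      apply Submodule.eq_top_iff'.mpr
      intro x
      rw [Subsingleton.elim x 0]
      exact Submodule.zero_mem _
  | succ b ihb =>
    obtain ⟨L⟩ := ihb
    haveI : FiniteDimensional K (M.V (b + 1)) := hfd _
    set Kr := LinearMap.ker (M.f b) with hKr
    obtain ⟨C, hC⟩ := Submodule.exists_isCompl Kr
    set r := Module.finrank K C with hr
    set cb : Module.Basis (Fin r) K C := Module.finBasis K C with hcb
    set f' : C →ₗ[K] M.V b := (M.f b) ∘ₗ C.subtype with hf'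
    have hker' : LinearMap.ker f' = ⊥ := by
      apply LinearMap.ker_eq_bot'.mpr
      intro x hx
      have h1 : (x : M.V (b + 1)) ∈ Kr := hx
      have h2 := hC.disjoint.le_bot (Submodule.mem_inf.mpr ⟨h1, x.2⟩)
      exact Subtype.ext h2
    set v : Fin r → M.V b := fun t => f' (cb t) with hv_def
    have hv : LinearIndependent K v := cb.linearIndependent.map' f' hker'
    obtain ⟨L', σ, hinj, hin, hmem⟩ := exists_matching M b r v hv L
    have hjσ : ∀ t, L'.j (σ t) = b := fun t => le_antisymm (L'.hjb _) (hin t).2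
    have hspanv : Submodule.span K (Set.range v) = LinearMap.range f' := by
      have h1 : Set.range v = ⇑f' '' Set.range ⇑cb := by
        rw [hv_def]; rw [← Set.range_comp]; rfl
      rw [h1, Submodule.span_image, cb.span_eq, Submodule.map_top]
    have hmem' : ∀ t, ∃ y : C, f' y = L'.x (σ t) b := by
      intro t
      have := hmem t
      rw [hspanv] at this
      exact LinearMap.mem_range.mp this
    choose w hw using hmem'
    have hwLI : LinearIndependent K w := by
      apply LinearIndependent.of_comp f'
      have h1 : ⇑f' ∘ w = fun t => L'.x (σ t) b := funext hw
      rw [h1]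
      have h2 : (fun t => L'.x (σ t) b)
          = (fun t => (L'.bas b le_rfl) ⟨σ t, hin t⟩) :=
        funext fun t => (L'.bas_apply b le_rfl ⟨σ t, hin t⟩).symm
      rw [h2]
      exact (L'.bas b le_rfl).linearIndependent.comp _
        (fun a b hab => hinj (congrArg Subtype.val hab))
    -- a basis of `C` with vectors `w`
    have hcbW : ∃ cbW : Module.Basis (Fin r) K C, ∀ t, cbW t = w t := by
      rcases Nat.eq_zero_or_pos r with h0 | hpos
      · haveI : Subsingleton C := Module.finrank_zero_iff.mp (h0 ▸ hr.symm)
        haveI : IsEmpty (Fin r) := by rw [h0]; exact Fin.isEmpty'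
        exact ⟨Module.Basis.empty C, fun t => isEmptyElim t⟩
      · haveI : Nonempty (Fin r) := ⟨⟨0, hpos⟩⟩
        exact ⟨basisOfLinearIndependentOfCardEqFinrank hwLI (by simp [hr]),
          fun t => congrFun (coe_basisOfLinearIndependentOfCardEqFinrank _ _) t⟩
    obtain ⟨cbW, hcbW⟩ := hcbW
    set s' := Module.finrank K Kr with hs'
    set kb : Module.Basis (Fin s') K Kr := Module.finBasis K Kr with hkb
    -- the combined basis of `M.V (b+1)`
    set BB : Module.Basis (Fin r ⊕ Fin s') K (M.V (b + 1)) :=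
      (cbW.prod kb).map (Submodule.prodEquivOfIsCompl C Kr hC.symm) with hBB
    have hBBl : ∀ t, BB (Sum.inl t) = (w t).1 := by
      intro t
      rw [hBB, Module.Basis.map_apply, Module.Basis.prod_apply]
      simp [hcbW t]
    have hBBr : ∀ s, BB (Sum.inr s) = (kb s).1 := by
      intro s
      rw [hBB, Module.Basis.map_apply, Module.Basis.prod_apply]
      simp
    -- data of the new interval basis
    set matched : L'.ι → Prop := fun k => ∃ t, σ t = k with hmatched
    have hmt : ∀ (k : L'.ι) (h : matched k), σ h.choose = k := fun k h => h.choose_spec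
    set topv : L'.ι → M.V (b + 1) := fun k => if h : matched k then (w h.choose).1 else 0
      with htopv
    have htopσ : ∀ t, topv (σ t) = (w t).1 := by
      intro t
      have hm : matched (σ t) := ⟨t, rfl⟩
      have : hm.choose = t := hinj (hmt _ hm)
      simp only [htopv, dif_pos hm, this]
    set ι'' : Type := L'.ι ⊕ Fin s' with hι''
    set i'' : ι'' → ℕ := Sum.elim L'.i (fun _ => b) with hi''
    set j'' : ι'' → ℕ := Sum.elim (fun k => if matched k then b + 1 else L'.j k)
      (fun _ => b + 1) with hj''
    set x'' : ι'' → ∀ m, M.V m := Sum.elim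
      (fun k m => if m = b + 1 then place (topv k) m else L'.x k m)
      (fun s => place ((kb s).1)) with hx''
    have hx''top : ∀ k, x'' (Sum.inl k) (b + 1) = topv k := by
      intro k
      simp [hx'', place_self]
    have hx''low : ∀ k m, m ≠ b + 1 → x'' (Sum.inl k) m = L'.x k m := by
      intro k m hm
      simp only [hx'', Sum.elim_inl, if_neg hm]
    have hjmatched : ∀ k, matched k → L'.j k = b := by
      rintro k ⟨t, rfl⟩; exact hjσ t
    have hj'iff : ∀ (m : ℕ), m ≤ b → ∀ k : L'.ι, (m ≤ L'.j k ↔ m ≤ j'' (Sum.inl k)) := by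
      intro m hm k
      by_cases h : matched k
      · simp only [hj'', Sum.elim_inl, if_pos h]
        constructor
        · intro _; omega
        · intro _; rw [hjmatched k h]; exact hm
      · simp only [hj'', Sum.elim_inl, if_neg h]
    have heS : ∀ (m : ℕ), m ≤ b →
        ∃ eS : {k'' : ι'' // i'' k'' < m ∧ m ≤ j'' k''} ≃ {k : L'.ι // L'.i k < m ∧ m ≤ L'.j k},
          ∀ k', x'' k'.1 m = L'.x (eS k').1 m := by
      intro m hm
      have hblt : ¬ (b < m) := by omega
      refine ⟨⟨fun k' => match k' with
        | ⟨Sum.inl k, h⟩ => ⟨k, ⟨h.1, (hj'iff m hm k).mpr h.2⟩⟩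
        | ⟨Sum.inr s, h⟩ => absurd h.1 hblt,
        fun k => ⟨Sum.inl k.1, ⟨k.2.1, (hj'iff m hm k.1).mp k.2.2⟩⟩, ?_, ?_⟩, ?_⟩
      · rintro ⟨k | s, h⟩
        · rfl
        · exact absurd h.1 hblt
      · intro k; rfl
      · rintro ⟨k | s, h⟩
        · exact hx''low k m (by omega)
        · exact absurd h.1 hblt
    have hmatch2 : ∀ k : L'.ι, (i'' (Sum.inl k) < b + 1 ∧ b + 1 ≤ j'' (Sum.inl k)) → matched k := by
      rintro k ⟨h1, h2⟩
      by_contra h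
      simp only [hj'', Sum.elim_inl, if_neg h] at h2
      exact absurd (le_trans h2 (L'.hjb k)) (by omega)
    have he2 : ∃ e2 : {k'' : ι'' // i'' k'' < b + 1 ∧ b + 1 ≤ j'' k''} ≃ (Fin r ⊕ Fin s'),
        ∀ k', x'' k'.1 (b + 1) = BB (e2 k') := by
      refine ⟨⟨fun k' => match k' with
        | ⟨Sum.inl k, h⟩ => Sum.inl (hmatch2 k h).choose
        | ⟨Sum.inr s, _⟩ => Sum.inr s,
        Sum.elim
          (fun t => ⟨Sum.inl (σ t), ⟨by have := L'.hij (σ t); have := hjσ t; simp only [hi'', Sum.elim_inl]; omega,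
            by simp only [hj'', Sum.elim_inl, if_pos (⟨t, rfl⟩ : matched (σ t))]; rw [if_pos (⟨t, rfl⟩ : matched (σ t))]⟩⟩)
          (fun s => ⟨Sum.inr s, ⟨by simp only [hi'', Sum.elim_inr]; omega,
            by simp only [hj'', Sum.elim_inr]; exact le_rfl⟩⟩), ?_, ?_⟩, ?_⟩
      · rintro ⟨k | s, h⟩
        · exact Subtype.ext (congrArg Sum.inl (hmt k (hmatch2 k h)))
        · rfl
      · rintro (t | s)
        · show Sum.inl _ = Sum.inl t
          exact congrArg Sum.inl (hinj (hmt (σ t) _))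
        · rfl
      · rintro ⟨k | s, h⟩
        · show x'' (Sum.inl k) (b + 1) = BB (Sum.inl (hmatch2 k h).choose)
          rw [hx''top k, hBBl]
          simp only [htopv, dif_pos (hmatch2 k h)]
        · show x'' (Sum.inr s) (b + 1) = BB (Sum.inr s)
          rw [hBBr]
          simp only [hx'', Sum.elim_inr]
          exact place_self _
    have hbig : ∀ m, b + 1 < m → IsEmpty {k'' : ι'' // i'' k'' < m ∧ m ≤ j'' k''} := by
      intro m hm
      refine ⟨fun k' => ?_⟩
      rcases k' with ⟨k | s, h⟩
      · have h2 := h.2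
        by_cases hk : matched k
        · simp only [hj'', Sum.elim_inl, if_pos hk] at h2; omega
        · simp only [hj'', Sum.elim_inl, if_neg hk] at h2
          have := L'.hjb k; omega
      · have h2 := h.2
        simp only [hj'', Sum.elim_inr] at h2; omega
    refine ⟨⟨ι'', i'', j'', x'', ?_, ?_, ?_, ?_, ?_, ?_⟩⟩
    · -- hij
      rintro (k | s)
      · simp only [hi'', hj'', Sum.elim_inl]
        by_cases h : matched k
        · rw [if_pos h]
          have := L'.hij k
          have := L'.hjb k
          omega
        · rw [if_neg h]; exact L'.hij k
      · simp only [hi'', hj'', Sum.elim_inr]; omega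
    · -- hjb
      rintro (k | s)
      · simp only [hj'', Sum.elim_inl]
        by_cases h : matched k
        · rw [if_pos h]
        · rw [if_neg h]; exact le_trans (L'.hjb k) (by omega)
      · simp only [hj'', Sum.elim_inr]; exact le_rfl
    · -- chain
      rintro (k | s) m h1 h2
      · simp only [hi'', Sum.elim_inl] at h1
        simp only [hj'', Sum.elim_inl] at h2
        by_cases hmb : m = b
        · subst hmb
          have hma : matched k := by
            by_contra hnm
            rw [if_neg hnm] at h2
            exact absurd (lt_of_lt_of_le h2 (L'.hjb k)) (lt_irrefl _)
          rw [hx''top k, hx''low k m (by omega)]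
          simp only [htopv, dif_pos hma]
          have := hw hma.choose
          rw [hmt k hma] at this
          exact this
        · have hmlt : m < b := by
            by_cases h : matched k
            · rw [if_pos h] at h2; omega
            · rw [if_neg h] at h2
              have := L'.hjb k; omega
          rw [hx''low k (m+1) (by omega), hx''low k m (by omega)]
          apply L'.chain k m h1
          by_cases h : matched k
          · rw [hjmatched k h]; exact hmlt
          · rw [if_neg h] at h2; exact h2
      · simp only [hi'', Sum.elim_inr] at h1
        simp only [hj'', Sum.elim_inr] at h2
        omega
    · -- dies
      rintro (k | s)
      · show M.f (L'.i k) (x'' (Sum.inl k) (L'.i k + 1)) = 0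
        have h1 : L'.i k + 1 ≠ b + 1 := by
          have := L'.hij k; have := L'.hjb k; omega
        rw [hx''low k _ h1]
        exact L'.dies k
      · show M.f (i'' (Sum.inr s)) (x'' (Sum.inr s) (i'' (Sum.inr s) + 1)) = 0
        have hi : i'' (Sum.inr s) = b := rfl
        rw [hi]
        have hx : x'' (Sum.inr s) (b + 1) = ((kb s) : M.V (b+1)) := by
          simp only [hx'', Sum.elim_inr]
          exact place_self _
        rw [hx]
        exact (kb s).2
    · -- indep
      intro m
      rcases lt_trichotomy m (b + 1) with hm | hm | hm
      · have hmb : m ≤ b := by omega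
        obtain ⟨eS, hval⟩ := heS m hmb
        have he : (fun k' : {k'' : ι'' // i'' k'' < m ∧ m ≤ j'' k''} => x'' k'.1 m)
            = (fun k : {k : L'.ι // L'.i k < m ∧ m ≤ L'.j k} => L'.x k.1 m) ∘ ⇑eS :=
          funext hval
        rw [he]
        exact (L'.indep m).comp ⇑eS eS.injective
      · subst hm
        obtain ⟨e2, hval⟩ := he2
        have he : (fun k' : {k'' : ι'' // i'' k'' < b + 1 ∧ b + 1 ≤ j'' k''} => x'' k'.1 (b + 1))
            = ⇑BB ∘ ⇑e2 := funext hval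
        rw [he]
        exact BB.linearIndependent.comp ⇑e2 e2.injective
      · haveI := hbig m hm
        exact linearIndependent_empty_type
    · -- spans
      intro m hm
      rcases Nat.lt_or_ge m (b + 1) with h | h
      · have hmb : m ≤ b := by omega
        obtain ⟨eS, hval⟩ := heS m hmb
        have he : (fun k' : {k'' : ι'' // i'' k'' < m ∧ m ≤ j'' k''} => x'' k'.1 m)
            = (fun k : {k : L'.ι // L'.i k < m ∧ m ≤ L'.j k} => L'.x k.1 m) ∘ ⇑eS :=
          funext hval
        rw [he, eS.surjective.range_comp]
        exact L'.spans m hmb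
      · have hm2 : m = b + 1 := le_antisymm hm h
        subst hm2
        obtain ⟨e2, hval⟩ := he2
        have he : (fun k' : {k'' : ι'' // i'' k'' < b + 1 ∧ b + 1 ≤ j'' k''} => x'' k'.1 (b + 1))
            = ⇑BB ∘ ⇑e2 := funext hval
        rw [he, e2.surjective.range_comp]
        exact BB.span_eq

/-! ### From an interval basis over `n` to the decomposition -/

lemma IB.spans_all (L : IB M n) (m : ℕ) : Submodule.span K
    (Set.range (fun k : {k : L.ι // L.i k < m ∧ m ≤ L.j k} => L.x k.1 m)) = ⊤ := by
  by_cases hm : m ≤ n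
  · exact L.spans m hm
  · haveI := M.small m (Or.inr (by omega))
    apply Submodule.eq_top_iff'.mpr
    intro x
    rw [Subsingleton.elim x 0]
    exact Submodule.zero_mem _

/-- The basis of any level given by an interval basis over all of `M`. -/
def IB.basN (L : IB M n) (m : ℕ) :
    Module.Basis {k : L.ι // L.i k < m ∧ m ≤ L.j k} K (M.V m) :=
  Module.Basis.mk (L.indep m) (by rw [L.spans_all m])

lemma IB.basN_apply (L : IB M n) (m : ℕ) (k : {k : L.ι // L.i k < m ∧ m ≤ L.j k}) :
    L.basN m k = L.x k.1 m := by
  rw [IB.basN, Module.Basis.coe_mk]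

/-- The space at level `m` spanned by the intervals satisfying `p`. -/
abbrev IB.FV (L : IB M n) (p : L.ι → Prop) (m : ℕ) : Type :=
  {k : L.ι // p k ∧ (L.i k < m ∧ m ≤ L.j k)} →₀ K

/-- The structure maps between these spaces. -/
def IB.Ff (L : IB M n) (p : L.ι → Prop) (m : ℕ) : L.FV p (m + 1) →ₗ[K] L.FV p m :=
  Finsupp.lsum K (fun k' => if h : L.i k'.1 < m ∧ m ≤ L.j k'.1
    then Finsupp.lsingle ⟨k'.1, k'.2.1, h⟩ else 0)

lemma IB.Ff_single (L : IB M n) (p : L.ι → Prop) (m : ℕ)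
    (k' : {k : L.ι // p k ∧ (L.i k < m + 1 ∧ m + 1 ≤ L.j k)}) (c : K) :
    L.Ff p m (Finsupp.single k' c) = if h : L.i k'.1 < m ∧ m ≤ L.j k'.1
      then Finsupp.single (⟨k'.1, k'.2.1, h⟩ :
        {k : L.ι // p k ∧ (L.i k < m ∧ m ≤ L.j k)}) c else 0 := by
  rw [IB.Ff, Finsupp.lsum_single]
  by_cases h : L.i k'.1 < m ∧ m ≤ L.j k'.1
  · rw [dif_pos h, dif_pos h]; rfl
  · rw [dif_neg h, dif_neg h]; rfl

/-- The subrepresentation spanned by the intervals satisfying `p`. -/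
def IB.FRep (L : IB M n) (p : L.ι → Prop) : ARep K n where
  V := L.FV p
  f := L.Ff p
  small := fun m hm => ⟨fun a b => Finsupp.ext (fun k' => by
    exfalso
    have h1 := k'.2.2.1
    have h2 := k'.2.2.2
    have h3 := L.hjb k'.1
    rcases hm with h | h <;> omega)⟩

/-- The index equivalence splitting a level into `p`-part and non-`p`-part. -/
def IB.eqv (L : IB M n) (p : L.ι → Prop) (m : ℕ) :
    {k : L.ι // L.i k < m ∧ m ≤ L.j k} ≃
      ({k : L.ι // p k ∧ (L.i k < m ∧ m ≤ L.j k)} ⊕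
       {k : L.ι // ¬p k ∧ (L.i k < m ∧ m ≤ L.j k)}) where
  toFun := fun s => if h : p s.1 then Sum.inl ⟨s.1, h, s.2⟩ else Sum.inr ⟨s.1, h, s.2⟩
  invFun := Sum.elim (fun a => ⟨a.1, a.2.2⟩) (fun b => ⟨b.1, b.2.2⟩)
  left_inv := fun s => by by_cases h : p s.1 <;> simp [h]
  right_inv := fun ab => by
    rcases ab with a | b
    · simp [a.2.1]
    · simp [b.2.1]

/-- The level isomorphism splitting off the `p`-part. -/
def IB.esplit (L : IB M n) (p : L.ι → Prop) (m : ℕ) :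
    M.V m ≃ₗ[K] (L.FV p m × L.FV (fun k => ¬p k) m) :=
  (L.basN m).repr.trans ((Finsupp.domLCongr (L.eqv p m)).trans
    (Finsupp.sumFinsuppLEquivProdFinsupp K))

lemma sumFinsupp_single_inl {α β : Type} (a : α) (c : K) :
    (Finsupp.sumFinsuppLEquivProdFinsupp (M := K) K (α := α) (β := β))
      (Finsupp.single (Sum.inl a) c) = (Finsupp.single a c, 0) := by
  simp only [Finsupp.sumFinsuppLEquivProdFinsupp_apply, AddEquiv.toEquiv_eq_coe,
    Equiv.toFun_as_coe, EquivLike.coe_coe, Finsupp.sumFinsuppAddEquivProdFinsupp_apply,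
    Finsupp.comapDomain_single, Prod.mk.injEq, true_and]
  ext b
  simp [Finsupp.comapDomain_apply, Finsupp.single_apply]

lemma sumFinsupp_single_inr {α β : Type} (b : β) (c : K) :
    (Finsupp.sumFinsuppLEquivProdFinsupp (M := K) K (α := α) (β := β))
      (Finsupp.single (Sum.inr b) c) = (0, Finsupp.single b c) := by
  simp only [Finsupp.sumFinsuppLEquivProdFinsupp_apply, AddEquiv.toEquiv_eq_coe,
    Equiv.toFun_as_coe, EquivLike.coe_coe, Finsupp.sumFinsuppAddEquivProdFinsupp_apply,
    Finsupp.comapDomain_single, Prod.mk.injEq]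
  constructor
  · ext a
    simp [Finsupp.comapDomain_apply, Finsupp.single_apply]
  · trivial

lemma IB.esplit_basvec (L : IB M n) (p : L.ι → Prop) (m : ℕ) (k : L.ι)
    (h : L.i k < m ∧ m ≤ L.j k) :
    L.esplit p m (L.x k m) = if hp : p k
      then (Finsupp.single ⟨k, hp, h⟩ 1, 0)
      else (0, Finsupp.single ⟨k, hp, h⟩ 1) := by
  have h1 : L.x k m = L.basN m ⟨k, h⟩ := (L.basN_apply m ⟨k, h⟩).symm
  rw [IB.esplit, h1]
  simp only [LinearEquiv.trans_apply, Module.Basis.repr_self, Finsupp.domLCongr_single]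
  rw [IB.eqv]
  by_cases hp : p k
  · simp only [Equiv.coe_fn_mk, dif_pos hp, dif_pos hp]
    exact sumFinsupp_single_inl _ _
  · simp only [Equiv.coe_fn_mk, dif_neg hp, dif_neg hp]
    exact sumFinsupp_single_inr _ _

lemma IB.esplit_comm (L : IB M n) (p : L.ι → Prop) (m : ℕ) (xv : M.V (m + 1)) :
    L.esplit p m (M.f m xv) = (LinearMap.prodMap (L.Ff p m) (L.Ff (fun k => ¬p k) m))
      (L.esplit p (m + 1) xv) := by
  have hmaps : (L.esplit p m).toLinearMap ∘ₗ M.f m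
      = (LinearMap.prodMap (L.Ff p m) (L.Ff (fun k => ¬p k) m)) ∘ₗ
        (L.esplit p (m + 1)).toLinearMap := by
    apply Module.Basis.ext (L.basN (m + 1))
    intro k'
    obtain ⟨k, hk⟩ := k'
    rw [L.basN_apply (m + 1) ⟨k, hk⟩]
    simp only [LinearMap.coe_comp, Function.comp_apply, LinearEquiv.coe_coe]
    rw [L.esplit_basvec p (m + 1) k hk]
    by_cases him : L.i k < m
    · have hin : L.i k < m ∧ m ≤ L.j k := ⟨him, by omega⟩
      rw [L.chain k m him (by omega), L.esplit_basvec p m k hin]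
      by_cases hp : p k
      · rw [dif_pos hp, dif_pos hp]
        simp only [LinearMap.prodMap_apply, map_zero]
        rw [L.Ff_single p m ⟨k, hp, hk⟩ 1, dif_pos hin]
      · rw [dif_neg hp, dif_neg hp]
        simp only [LinearMap.prodMap_apply, map_zero]
        rw [L.Ff_single (fun k => ¬p k) m ⟨k, hp, hk⟩ 1, dif_pos hin]
    · have hie : L.i k = m := by omega
      have hd : M.f m (L.x k (m + 1)) = 0 := by
        rw [← hie]; exact L.dies k
      rw [hd, map_zero]
      have hnotin : ¬(L.i k < m ∧ m ≤ L.j k) := fun h => him h.1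
      by_cases hp : p k
      · rw [dif_pos hp]
        simp only [LinearMap.prodMap_apply, map_zero]
        rw [L.Ff_single p m ⟨k, hp, hk⟩ 1, dif_neg hnotin]
        exact Prod.ext rfl rfl
      · rw [dif_neg hp]
        simp only [LinearMap.prodMap_apply, map_zero]
        rw [L.Ff_single (fun k => ¬p k) m ⟨k, hp, hk⟩ 1, dif_neg hnotin]
        exact Prod.ext rfl rfl
  exact LinearMap.congr_fun hmaps xv

/-- The one-interval representation is isomorphic to the interval module levelwise. -/
def IB.eps (L : IB M n) (k₁ : L.ι) (m : ℕ) :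
    L.FV (fun k => k = k₁) m ≃ₗ[K] ispace K (L.i k₁) (L.j k₁) m where
  toFun := fun g => ⟨if h : L.i k₁ < m ∧ m ≤ L.j k₁ then g ⟨k₁, rfl, h⟩ else 0,
    (mem_Vsp K _ _).mpr (fun hn => dif_neg hn)⟩
  map_add' := fun g₁ g₂ => by
    apply Subtype.ext
    by_cases h : L.i k₁ < m ∧ m ≤ L.j k₁
    · simp [dif_pos h]
    · simp [dif_neg h]
  map_smul' := fun c g => by
    apply Subtype.ext
    by_cases h : L.i k₁ < m ∧ m ≤ L.j k₁
    · simp [dif_pos h]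
    · simp [dif_neg h]
  invFun := fun c => if h : L.i k₁ < m ∧ m ≤ L.j k₁
    then Finsupp.single ⟨k₁, rfl, h⟩ c.1 else 0
  left_inv := fun g => by
    by_cases h : L.i k₁ < m ∧ m ≤ L.j k₁
    · simp only [dif_pos h]
      apply Finsupp.ext
      intro a
      have ha : a = ⟨k₁, rfl, h⟩ := Subtype.ext a.2.1
      subst ha
      simp [Finsupp.single_eq_same]
    · simp only [dif_neg h]
      haveI : IsEmpty {k : L.ι // k = k₁ ∧ (L.i k < m ∧ m ≤ L.j k)} :=
        ⟨fun a => h (a.2.1 ▸ a.2.2)⟩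
      exact (Finsupp.ext (fun a => isEmptyElim a)).symm
  right_inv := fun c => by
    by_cases h : L.i k₁ < m ∧ m ≤ L.j k₁
    · simp only [dif_pos h]
      exact Subtype.ext (by simp [dif_pos h])
    · simp only [dif_neg h]
      exact Subtype.ext (by
        simp only [dif_neg h]
        exact ((mem_Vsp K _ _).mp c.2 h).symm)

lemma IB.eps_comm (L : IB M n) (k₁ : L.ι) (m : ℕ) (g : L.FV (fun k => k = k₁) (m + 1)) :
    L.eps k₁ m (L.Ff (fun k => k = k₁) m g)
      = imap K (L.i k₁) (L.j k₁) m (L.eps k₁ (m + 1) g) := by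
  have hmaps : (L.eps k₁ m).toLinearMap ∘ₗ L.Ff (fun k => k = k₁) m
      = (imap K (L.i k₁) (L.j k₁) m) ∘ₗ (L.eps k₁ (m + 1)).toLinearMap := by
    apply Finsupp.lhom_ext
    intro a c
    obtain ⟨k, hk1, hk2⟩ := a
    subst hk1
    simp only [LinearMap.coe_comp, Function.comp_apply, LinearEquiv.coe_coe]
    rw [L.Ff_single (fun k' => k' = k) m ⟨k, rfl, hk2⟩ c]
    by_cases h : L.i k < m ∧ m ≤ L.j k
    · rw [dif_pos h]
      apply Subtype.ext
      have hL : (((L.eps k m) (Finsupp.single ⟨k, rfl, h⟩ c)) : K) = c := by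
        show (if h' : L.i k < m ∧ m ≤ L.j k then (Finsupp.single
          (⟨k, rfl, h⟩ : {k' : L.ι // k' = k ∧ (L.i k' < m ∧ m ≤ L.j k')}) c)
            ⟨k, rfl, h'⟩ else 0) = c
        rw [dif_pos h]
        simp
      have hR : (((imap K (L.i k) (L.j k) m)
          ((L.eps k (m + 1)) (Finsupp.single ⟨k, rfl, hk2⟩ c))) : K) = c := by
        rw [imap, dif_pos ⟨h, hk2⟩]
        simp only [LinearMap.codRestrict_apply, Submodule.coe_subtype]
        show (if h' : L.i k < m + 1 ∧ m + 1 ≤ L.j k then (Finsupp.single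
          (⟨k, rfl, hk2⟩ : {k' : L.ι // k' = k ∧ (L.i k' < m + 1 ∧ m + 1 ≤ L.j k')}) c)
            ⟨k, rfl, h'⟩ else 0) = c
        rw [dif_pos hk2]
        simp
      rw [hL, hR]
    · rw [dif_neg h, map_zero, imap, dif_neg (fun hh => h hh.1)]
      simp
  exact LinearMap.congr_fun hmaps g

/-- Dropping a subsingleton factor of a product. -/
def dropEquiv {A B : Type} [AddCommGroup A] [Module K A] [AddCommGroup B] [Module K B]
    (hB : Subsingleton B) : (A × B) ≃ₗ[K] A :=
  LinearEquiv.ofLinear (LinearMap.fst K A B) (LinearMap.inl K A B)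
    (LinearMap.ext fun x => rfl)
    (LinearMap.ext fun x => Prod.ext rfl (Subsingleton.elim _ _))

lemma dropEquiv_apply {A B : Type} [AddCommGroup A] [Module K A] [AddCommGroup B]
    [Module K B] (hB : Subsingleton B) (x : A × B) : dropEquiv (K := K) hB x = x.1 := rfl


/-- Gabriel's theorem in type `A`: every finite-dimensional
indecomposable representation of the `A_n` quiver is isomorphic to an interval module
`M_{ij}` with `0 ≤ i < j ≤ n`; consequently its dimension vector is the positive root
`u_{ij} = e_{i+1} + ⋯ + e_j` of the `A_n` root system. -/
theorem stmt5 (K : Type) [Field K] (n : ℕ) (M : ARep K n)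
    (hfd : ∀ m, FiniteDimensional K (M.V m)) (hind : Indec M) :
    ∃ (i j : ℕ) (hij : i < j) (hj : j ≤ n),
      RepIso M (intervalRep K n i j hj) ∧
      (∀ m, Module.finrank K (M.V m) = if i < m ∧ m ≤ j then 1 else 0) := by
  classical
  obtain ⟨L⟩ := exists_IB M hfd n
  obtain ⟨m₀, hm₀⟩ := hind.1
  have hne : Nonempty {k : L.ι // L.i k < m₀ ∧ m₀ ≤ L.j k} := by
    by_contra h
    haveI he : IsEmpty {k : L.ι // L.i k < m₀ ∧ m₀ ≤ L.j k} := not_nonempty_iff.mp h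
    haveI hs : Subsingleton ({k : L.ι // L.i k < m₀ ∧ m₀ ≤ L.j k} →₀ K) :=
      ⟨fun a b => Finsupp.ext (fun x => isEmptyElim x)⟩
    haveI : Subsingleton (M.V m₀) := Equiv.subsingleton (L.basN m₀).repr.toEquiv
    obtain ⟨x, y, hxy⟩ := hm₀
    exact hxy (Subsingleton.elim x y)
  obtain ⟨⟨k₁, hk₁⟩⟩ := hne
  have hiso : RepIso M ((L.FRep (fun k => k = k₁)).dsum (L.FRep (fun k => ¬ k = k₁))) :=
    ⟨fun m => L.esplit (fun k => k = k₁) m, fun m xv => L.esplit_comm (fun k => k = k₁) m xv⟩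
  rcases hind.2 (L.FRep (fun k => k = k₁)) (L.FRep (fun k => ¬ k = k₁)) hiso with hN | hP
  · exfalso
    have hin1 : L.i k₁ < L.i k₁ + 1 ∧ L.i k₁ + 1 ≤ L.j k₁ := ⟨Nat.lt_succ_self _, L.hij k₁⟩
    haveI := hN (L.i k₁ + 1)
    have h10 := Subsingleton.elim (α := (L.FRep (fun k => k = k₁)).V (L.i k₁ + 1))
      (Finsupp.single (⟨k₁, rfl, hin1⟩ :
        {k : L.ι // k = k₁ ∧ (L.i k < L.i k₁ + 1 ∧ L.i k₁ + 1 ≤ L.j k)}) (1 : K)) 0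
    have h2 : (1 : K) = 0 := by
      calc (1 : K) = (Finsupp.single (⟨k₁, rfl, hin1⟩ :
          {k : L.ι // k = k₁ ∧ (L.i k < L.i k₁ + 1 ∧ L.i k₁ + 1 ≤ L.j k)}) (1 : K))
            ⟨k₁, rfl, hin1⟩ := (Finsupp.single_eq_same).symm
        _ = (0 : {k : L.ι // k = k₁ ∧ (L.i k < L.i k₁ + 1 ∧ L.i k₁ + 1 ≤ L.j k)} →₀ K)
            ⟨k₁, rfl, hin1⟩ := by rw [h10]; rfl
        _ = 0 := rfl
    exact one_ne_zero h2
  · refine ⟨L.i k₁, L.j k₁, L.hij k₁, L.hjb k₁, ⟨fun m =>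
      (L.esplit (fun k => k = k₁) m).trans ((dropEquiv (hP m)).trans (L.eps k₁ m)), ?_⟩, ?_⟩
    · intro m xv
      show (L.eps k₁ m) ((dropEquiv (K := K) (hP m))
        ((L.esplit (fun k => k = k₁) m) (M.f m xv))) = _
      rw [L.esplit_comm (fun k => k = k₁) m xv]
      erw [dropEquiv_apply]
      simp only [LinearMap.prodMap_apply]
      rw [L.eps_comm k₁ m]
      rfl
    · intro m
      rw [LinearEquiv.finrank_eq ((L.esplit (fun k => k = k₁) m).trans
        ((dropEquiv (hP m)).trans (L.eps k₁ m)))]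
      rw [finrank_Vsp K (L.i k₁ < m ∧ m ≤ L.j k₁)]
      congr 1


end
end

section
/- Let Γ be a free abelian group of finite rank with a norm ‖·‖ on Γ ⊗ ℝ, let Z : Γ → ℂ be a group homomorphism, and let a : Γ \ {0} → M be a function to some set with distinguished element 0 with support Supp(a) = {γ : a(γ) ≠ 0}. Then the following are equivalent: (1) there exists C > 0 such that ‖γ‖ ≤ C·|Z(γ)| for all γ ∈ Supp(a); (2) there exists a quadratic form Q on Γ ⊗ ℝ which is negative on ker(Z ⊗ ℝ) \ {0} and nonnegative on Supp(a). -/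
open scoped RealInnerProductSpace

lemma quad_continuous {E : Type} [NormedAddCommGroup E] [NormedSpace ℝ E]
    [FiniteDimensional ℝ E] (Q : QuadraticForm ℝ E) : Continuous Q := by
  set B : E →ₗ[ℝ] E →ₗ[ℝ] ℝ := QuadraticMap.associatedHom ℝ Q
  have h : ∀ x, Q x = (LinearMap.toContinuousLinearMap (B x)) x := fun x =>
    (QuadraticMap.associated_eq_self_apply ℝ Q x).symm
  have hg : Continuous fun x => LinearMap.toContinuousLinearMap (B x) :=
    (LinearMap.toContinuousLinearMap.toLinearMap.comp B).continuous_of_finiteDimensional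
  simpa [← h] using hg.clm_apply continuous_id

lemma exists_quad {E F : Type} [NormedAddCommGroup E] [NormedSpace ℝ E]
    [NormedAddCommGroup F] [InnerProductSpace ℝ F]
    (L : E →ₗ[ℝ] ℂ) (T : E →L[ℝ] F) (hTinj : Function.Injective T)
    (S : Set E) (C : ℝ) (hC : 0 < C) (h : ∀ γ ∈ S, ‖γ‖ ≤ C * ‖L γ‖) :
    ∃ Q : QuadraticForm ℝ E,
      (∀ x : E, L x = 0 → x ≠ 0 → Q x < 0) ∧ (∀ γ ∈ S, 0 ≤ Q γ) := by
  set ε : ℝ := 1 / ((‖T‖ + 1) ^ 2 * C ^ 2) with hε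
  have hεpos : 0 < ε := by rw [hε]; positivity
  set QZ : QuadraticForm ℝ E :=
    (LinearMap.BilinMap.toQuadraticMap (innerₗ ℂ)).comp L with hQZ
  set QN : QuadraticForm ℝ E :=
    (LinearMap.BilinMap.toQuadraticMap (innerₗ F)).comp (T : E →ₗ[ℝ] F) with hQN
  have hQapp : ∀ x : E, (QZ - ε • QN) x = ‖L x‖ ^ 2 - ε * ‖T x‖ ^ 2 := by
    intro x
    have h1 : QZ x = ‖L x‖ ^ 2 := by
      rw [hQZ, QuadraticMap.comp_apply, LinearMap.BilinMap.toQuadraticMap_apply,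
        innerₗ_apply_apply, real_inner_self_eq_norm_sq]
    have h2 : QN x = ‖T x‖ ^ 2 := by
      rw [hQN, QuadraticMap.comp_apply, LinearMap.BilinMap.toQuadraticMap_apply,
        innerₗ_apply_apply]
      exact real_inner_self_eq_norm_sq (T x)
    rw [QuadraticMap.sub_apply, QuadraticMap.smul_apply, h1, h2, smul_eq_mul]
  refine ⟨QZ - ε • QN, ?_, ?_⟩
  · intro x hx hx0
    have hTx : T x ≠ 0 := fun hc => hx0 (hTinj (by simpa using hc))
    have hp : 0 < ‖T x‖ ^ 2 := pow_pos (norm_pos_iff.mpr hTx) 2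
    rw [hQapp, hx]
    simp only [norm_zero]
    nlinarith
  · intro γ hγ
    have h1 : ‖γ‖ ≤ C * ‖L γ‖ := h γ hγ
    have h2 : ‖T γ‖ ≤ ‖T‖ * ‖γ‖ := T.le_opNorm γ
    have hLγ : 0 ≤ ‖L γ‖ := norm_nonneg _
    have hTn : (0:ℝ) ≤ ‖T‖ := norm_nonneg _
    have h3 : ‖T γ‖ ≤ (‖T‖ + 1) * C * ‖L γ‖ := by nlinarith [norm_nonneg γ]
    rw [hQapp]
    have h4 : ε * ‖T γ‖ ^ 2 ≤ ε * ((‖T‖ + 1) * C * ‖L γ‖) ^ 2 :=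
      mul_le_mul_of_nonneg_left (pow_le_pow_left₀ (norm_nonneg _) h3 2) hεpos.le
    have h5 : ε * ((‖T‖ + 1) * C * ‖L γ‖) ^ 2 = ‖L γ‖ ^ 2 := by
      rw [hε]
      field_simp
    linarith

/-- equivalence of the two formulations of the Support Property.  Let
`E = Γ ⊗ ℝ` be a finite-dimensional real normed space (`Γ ⊂ E` the lattice), let
`L : E → ℂ` be the (real-linear extension of the) central charge, and let
`a : Γ \ {0} → M` have support `Supp(a) = {γ ∈ Γ, γ ≠ 0, a(γ) ≠ 0}`.  Then the
following are equivalent: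
(1) there is `C > 0` with `‖γ‖ ≤ C·|Z(γ)|` for all `γ ∈ Supp(a)`;
(2) there is a quadratic form `Q` on `Γ ⊗ ℝ` which is negative on `ker(Z ⊗ ℝ) \ {0}`
and nonnegative on `Supp(a)`. -/
theorem stmt7 (E : Type) [NormedAddCommGroup E] [NormedSpace ℝ E]
    [FiniteDimensional ℝ E]
    (Γ : AddSubgroup E) (L : E →ₗ[ℝ] ℂ)
    (M : Type) (z : M) (a : E → M) :
    (∃ C : ℝ, 0 < C ∧ ∀ γ : E, γ ∈ Γ → γ ≠ 0 → a γ ≠ z →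
        ‖γ‖ ≤ C * ‖L γ‖) ↔
    (∃ Q : QuadraticForm ℝ E,
        (∀ x : E, L x = 0 → x ≠ 0 → Q x < 0) ∧
        (∀ γ : E, γ ∈ Γ → γ ≠ 0 → a γ ≠ z → 0 ≤ Q γ)) := by
  constructor
  · rintro ⟨C, hC, h⟩
    obtain ⟨Q, hQ1, hQ2⟩ := exists_quad L (toEuclidean (E := E)).toContinuousLinearMap
      (by intro x y hxy; exact toEuclidean.injective (by simpa using hxy))
      {γ | γ ∈ Γ ∧ γ ≠ 0 ∧ a γ ≠ z} C hC
      (fun γ hγ => by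
        simpa using h γ hγ.1 hγ.2.1 hγ.2.2)
    exact ⟨Q, hQ1, fun γ hγ hγ0 haγ => hQ2 γ ⟨hγ, hγ0, haγ⟩⟩
  · rintro ⟨Q, hneg, hnn⟩
    set K : Set E := Metric.sphere (0:E) 1 ∩ Q ⁻¹' Set.Ici 0 with hK
    have hKc : IsCompact K :=
      (isCompact_sphere (0:E) 1).inter_right
        (isClosed_Ici.preimage (quad_continuous Q))
    have hmem : ∀ γ : E, γ ∈ Γ → γ ≠ 0 → a γ ≠ z → ‖γ‖⁻¹ • γ ∈ K := by
      intro γ hγ hγ0 haγ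
      constructor
      · simp [norm_smul, abs_of_nonneg (norm_nonneg γ),
          inv_mul_cancel₀ (norm_ne_zero_iff.mpr hγ0)]
      · have : Q (‖γ‖⁻¹ • γ) = ‖γ‖⁻¹ * ‖γ‖⁻¹ * Q γ := by
          simpa [smul_eq_mul] using QuadraticMap.map_smul Q (‖γ‖⁻¹) γ
        simp only [Set.mem_preimage, Set.mem_Ici, this]
        have := hnn γ hγ hγ0 haγ
        positivity
    rcases K.eq_empty_or_nonempty with hKe | hKne
    · refine ⟨1, one_pos, fun γ hγ hγ0 haγ => absurd (hmem γ hγ hγ0 haγ) ?_⟩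
      simp [hKe]
    · obtain ⟨x0, hx0K, hmin⟩ := hKc.exists_isMinOn hKne
        ((continuous_norm.comp L.continuous_of_finiteDimensional).continuousOn)
      set ε : ℝ := ‖L x0‖ with hε
      have hεpos : 0 < ε := by
        rcases lt_or_eq_of_le (norm_nonneg (L x0)) with hlt | heq
        · exact hlt
        · exfalso
          have hL0 : L x0 = 0 := norm_eq_zero.mp heq.symm
          have hx0ne : x0 ≠ 0 := by
            intro hc
            have := hx0K.1
            simp [hc] at this
          have h1 := hneg x0 hL0 hx0ne
          have h2 := hx0K.2
          simp only [Set.mem_preimage, Set.mem_Ici] at h2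
          linarith
      refine ⟨1 / ε, by positivity, fun γ hγ hγ0 haγ => ?_⟩
      have hxK := hmem γ hγ hγ0 haγ
      have hle : ε ≤ ‖L (‖γ‖⁻¹ • γ)‖ := hmin hxK
      have hnγ : (0:ℝ) < ‖γ‖ := norm_pos_iff.mpr hγ0
      have hLs : ‖L (‖γ‖⁻¹ • γ)‖ = ‖γ‖⁻¹ * ‖L γ‖ := by
        rw [map_smul]
        rw [show (‖γ‖⁻¹ • L γ) = (‖γ‖⁻¹ : ℂ) * L γ from by
          simp [Complex.real_smul]]
        rw [norm_mul]
        simp [abs_of_nonneg (inv_nonneg.mpr (norm_nonneg γ))]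
      rw [hLs] at hle
      rw [div_mul_eq_mul_div, le_div_iff₀ hεpos]
      calc ‖γ‖ * ε ≤ ‖γ‖ * (‖γ‖⁻¹ * ‖L γ‖) :=
            mul_le_mul_of_nonneg_left hle (norm_nonneg γ)
        _ = ‖L γ‖ := by field_simp
        _ = 1 * ‖L γ‖ := (one_mul _).symm
end

section
/- Let 𝔤 = ⊕_{γ∈Γ} 𝔤_γ be a Γ-graded Lie algebra over ℚ with Γ a free abelian group of finite rank, let (Z, a) be stability data with quadratic form Q, and let V ⊂ ℝ² ≅ ℂ be a strict sector (a convex cone not containing any straight line). Then the set Γ_V = {γ ∈ Γ \ {0} : Z(γ) ∈ V, Q(γ) ≥ 0} has the property that for any γ ∈ Γ_V, the number of ways to write γ = γ₁ + γ₂ with γ₁, γ₂ ∈ Γ_V is finite; consequently ⊕_{γ∈Γ_V} 𝔤_γ carries a well-defined pronilpotent Lie algebra structure after completion. -/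
open Complex

/-- The strict sector `V = {r e^{iθ} : r > 0, θ₁ < θ < θ₂}` in `ℂ`. -/
def strictSector (θ₁ θ₂ : ℝ) : Set ℂ :=
  {w : ℂ | ∃ (r θ : ℝ), 0 < r ∧ θ₁ < θ ∧ θ < θ₂ ∧
    w = (r : ℂ) * Complex.exp ((θ : ℂ) * Complex.I)}

/-- A quadratic form on a finite-dimensional real space is continuous. -/
theorem stmt8_qcont (d : ℕ) (Q : QuadraticForm ℝ (Fin d → ℝ)) :
    Continuous fun x => Q x := by
  have h : ∀ x, (QuadraticMap.associatedHom ℝ Q) x x = Q x :=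
    QuadraticMap.associated_eq_self_apply ℝ Q
  set B := QuadraticMap.associatedHom ℝ Q
  let f : (Fin d → ℝ) →ₗ[ℝ] ((Fin d → ℝ) →L[ℝ] ℝ) :=
    (LinearMap.toContinuousLinearMap : ((Fin d → ℝ) →ₗ[ℝ] ℝ) ≃ₗ[ℝ] _).toLinearMap ∘ₗ B
  have hf : Continuous f := f.continuous_of_finiteDimensional
  have : Continuous fun x => (f x) x :=
    isBoundedBilinearMap_apply.continuous.comp (hf.prodMk continuous_id)
  simpa [f, h] using this

/-- The support property: a uniform lower bound `m‖x‖ ≤ |Z(x)|` on `{Q ≥ 0}`. -/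
theorem stmt8_support_bound (d : ℕ) (ZR : (Fin d → ℝ) →ₗ[ℝ] ℂ)
    (Q : QuadraticForm ℝ (Fin d → ℝ))
    (hQ : ∀ x : Fin d → ℝ, ZR x = 0 → x ≠ 0 → Q x < 0) :
    ∃ m : ℝ, 0 < m ∧ ∀ x : Fin d → ℝ, 0 ≤ Q x → m * ‖x‖ ≤ ‖ZR x‖ := by
  have hZc : Continuous ZR := ZR.continuous_of_finiteDimensional
  set S : Set (Fin d → ℝ) := {x | ‖x‖ = 1 ∧ 0 ≤ Q x} with hS
  by_cases hne : S.Nonempty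
  · have hclosed : IsClosed S := by
      have : S = (fun x => ‖x‖) ⁻¹' {1} ∩ (fun x => Q x) ⁻¹' (Set.Ici 0) := by
        ext x; simp [hS, Set.mem_setOf_eq]
      rw [this]
      exact (isClosed_singleton.preimage continuous_norm).inter
        (isClosed_Ici.preimage (stmt8_qcont d Q))
    have hcpt : IsCompact S := by
      have hsub : S ⊆ Metric.closedBall 0 1 := by
        intro x hx; simp [Metric.mem_closedBall, dist_zero_right, hx.1]
      exact (isCompact_closedBall (0 : Fin d → ℝ) 1).of_isClosed_subset hclosed hsub
    obtain ⟨x₀, hx₀S, hx₀min⟩ := hcpt.exists_isMinOn hne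
      ((continuous_norm.comp hZc).continuousOn)
    refine ⟨‖ZR x₀‖, ?_, ?_⟩
    · rcases (norm_nonneg (ZR x₀)).lt_or_eq with h | h
      · exact h
      · exfalso
        have hz : ZR x₀ = 0 := norm_eq_zero.mp h.symm
        have hx0 : x₀ ≠ 0 := by
          intro h0; rw [h0] at hx₀S; simp [hS] at hx₀S
        exact absurd (hQ x₀ hz hx0) (not_lt.mpr hx₀S.2)
    · intro x hx
      rcases eq_or_ne x 0 with rfl | hx0
      · simp
      · have hn : 0 < ‖x‖ := norm_pos_iff.mpr hx0
        set y := ‖x‖⁻¹ • x with hy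
        have hyS : y ∈ S := by
          constructor
          · simp [hy, norm_smul, abs_of_pos (inv_pos.mpr hn), inv_mul_cancel₀ hn.ne']
          · have : Q y = (‖x‖⁻¹ * ‖x‖⁻¹) • Q x := Q.map_smul _ _
            rw [this]
            exact smul_nonneg (mul_nonneg (inv_nonneg.mpr hn.le) (inv_nonneg.mpr hn.le)) hx
        have hmin : ‖ZR x₀‖ ≤ ‖ZR y‖ := hx₀min hyS
        have hval : ‖ZR y‖ = ‖x‖⁻¹ * ‖ZR x‖ := by
          rw [hy, map_smul]
          simp [abs_of_pos (inv_pos.mpr hn)]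
        rw [hval] at hmin
        calc ‖ZR x₀‖ * ‖x‖ ≤ (‖x‖⁻¹ * ‖ZR x‖) * ‖x‖ := by
              exact mul_le_mul_of_nonneg_right hmin hn.le
          _ = ‖ZR x‖ := by field_simp
  · refine ⟨1, one_pos, fun x hx => ?_⟩
    rcases eq_or_ne x 0 with rfl | hx0
    · simp
    · exfalso
      have hn : 0 < ‖x‖ := norm_pos_iff.mpr hx0
      apply hne
      refine ⟨‖x‖⁻¹ • x, ?_, ?_⟩
      · simp [norm_smul, abs_of_pos (inv_pos.mpr hn), inv_mul_cancel₀ hn.ne']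
      · have : Q (‖x‖⁻¹ • x) = (‖x‖⁻¹ * ‖x‖⁻¹) • Q x := Q.map_smul _ _
        rw [this]
        exact smul_nonneg (mul_nonneg (inv_nonneg.mpr hn.le) (inv_nonneg.mpr hn.le)) hx

/-- On the strict sector, rotating by the bisector gives a definite real part. -/
theorem stmt8_sector_re_bound (θ₁ θ₂ : ℝ) (hθ : θ₂ - θ₁ < Real.pi) (w : ℂ)
    (hw : w ∈ strictSector θ₁ θ₂) :
    Real.cos ((θ₂ - θ₁) / 2) * ‖w‖ ≤
      (Complex.exp ((↑(-(θ₁ + θ₂) / 2) : ℂ) * Complex.I) * w).re := by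
  obtain ⟨r, θ, hr, h1, h2, rfl⟩ := hw
  set φ : ℝ := (θ₁ + θ₂) / 2
  have habs : ‖(r : ℂ) * Complex.exp ((θ : ℂ) * Complex.I)‖ = r := by
    rw [norm_mul, Complex.norm_exp_ofReal_mul_I, Complex.norm_real, Real.norm_eq_abs, abs_of_pos hr, mul_one]
  have hexp : Complex.exp ((↑(-(θ₁ + θ₂) / 2) : ℂ) * Complex.I) *
      ((r : ℂ) * Complex.exp ((θ : ℂ) * Complex.I)) =
      (r : ℂ) * Complex.exp ((↑(θ - φ) : ℂ) * Complex.I) := by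
    rw [mul_comm (cexp _), mul_assoc, ← Complex.exp_add]
    congr 2
    simp only [φ]
    push_cast
    ring
  rw [hexp, habs]
  have hre : ((r : ℂ) * Complex.exp ((↑(θ - φ) : ℂ) * Complex.I)).re
      = r * Real.cos (θ - φ) := by
    rw [Complex.re_ofReal_mul, Complex.exp_ofReal_mul_I_re]
  rw [hre]
  have hcos : Real.cos ((θ₂ - θ₁) / 2) ≤ Real.cos (θ - φ) := by
    rw [← Real.cos_abs (θ - φ)]
    apply Real.cos_le_cos_of_nonneg_of_le_pi (abs_nonneg _) (by linarith [Real.pi_pos])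
    rw [abs_le]; constructor <;> simp only [φ] <;> linarith
  calc Real.cos ((θ₂ - θ₁) / 2) * r ≤ Real.cos (θ - φ) * r :=
        mul_le_mul_of_nonneg_right hcos hr.le
    _ = r * Real.cos (θ - φ) := mul_comm _ _

theorem stmt8_re_le_abs (φ : ℝ) (w : ℂ) :
    (Complex.exp ((φ : ℂ) * Complex.I) * w).re ≤ ‖w‖ := by
  calc (Complex.exp ((φ : ℂ) * Complex.I) * w).re
      ≤ ‖Complex.exp ((φ : ℂ) * Complex.I) * w‖ := Complex.re_le_norm _
    _ = ‖w‖ := by rw [norm_mul, Complex.norm_exp_ofReal_mul_I, one_mul]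

/-- let `Γ = ℤ^d` with central charge `Z : Γ → ℂ` extending to the real
linear map `ZR` on `Γ ⊗ ℝ = ℝ^d`, and let `Q` be the quadratic form of the support
property (negative on `ker(Z ⊗ ℝ) \ {0}`).  For a strict sector `V` of angular width
`< π`, the set `Γ_V = {γ ≠ 0 : Z(γ) ∈ V, Q(γ) ≥ 0}` has the property that each
`γ ∈ Γ_V` admits only finitely many decompositions `γ = γ₁ + γ₂` with `γ₁, γ₂ ∈ Γ_V`
(so that the completed Lie algebra `⊕_{γ ∈ Γ_V} 𝔤_γ` is pronilpotent). -/
theorem stmt8 (d : ℕ) (Z : (Fin d → ℤ) →+ ℂ)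
    (ZR : (Fin d → ℝ) →ₗ[ℝ] ℂ)
    (hZR : ∀ γ : Fin d → ℤ, ZR (fun t => (γ t : ℝ)) = Z γ)
    (Q : QuadraticForm ℝ (Fin d → ℝ))
    (hQ : ∀ x : Fin d → ℝ, ZR x = 0 → x ≠ 0 → Q x < 0)
    (θ₁ θ₂ : ℝ) (hθ : θ₂ - θ₁ < Real.pi) :
    ∀ γ : Fin d → ℤ,
      γ ∈ {γ' : Fin d → ℤ | γ' ≠ 0 ∧ Z γ' ∈ strictSector θ₁ θ₂ ∧
            0 ≤ Q (fun t => (γ' t : ℝ))} →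
      Set.Finite {p : (Fin d → ℤ) × (Fin d → ℤ) |
        (p.1 ≠ 0 ∧ Z p.1 ∈ strictSector θ₁ θ₂ ∧ 0 ≤ Q (fun t => (p.1 t : ℝ))) ∧
        (p.2 ≠ 0 ∧ Z p.2 ∈ strictSector θ₁ θ₂ ∧ 0 ≤ Q (fun t => (p.2 t : ℝ))) ∧
        p.1 + p.2 = γ} := by
  intro γ hγ
  obtain ⟨hγ0, hγV, hγQ⟩ := hγ
  obtain ⟨r0, θ0, hr0, hθa, hθb, _⟩ := hγV
  have hΔpos : 0 < θ₂ - θ₁ := by linarith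
  set c := Real.cos ((θ₂ - θ₁) / 2) with hc
  have hcpos : 0 < c :=
    Real.cos_pos_of_mem_Ioo ⟨by linarith [Real.pi_pos], by linarith⟩
  obtain ⟨m, hm, hsup⟩ := stmt8_support_bound d ZR Q hQ
  set K := ‖Z γ‖ / (c * m) with hK
  set T : Set (Fin d → ℤ) := Set.pi Set.univ (fun _ => Set.Icc (-⌈K⌉) ⌈K⌉) with hT
  have hTfin : T.Finite := Set.Finite.pi (fun _ => Set.finite_Icc _ _)
  apply Set.Finite.subset (hTfin.image (fun a => (a, γ - a)))
  rintro ⟨p1, p2⟩ ⟨⟨h10, h1V, h1Q⟩, ⟨h20, h2V, h2Q⟩, hsum⟩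
  have hb1 := stmt8_sector_re_bound θ₁ θ₂ hθ _ h1V
  have hb2 := stmt8_sector_re_bound θ₁ θ₂ hθ _ h2V
  have hle : (Complex.exp ((↑(-(θ₁ + θ₂) / 2) : ℂ) * Complex.I) * Z γ).re
      ≤ ‖Z γ‖ := stmt8_re_le_abs _ _
  have hadd : Z p1 + Z p2 = Z γ := by rw [← map_add, hsum]
  have hsplit : (Complex.exp ((↑(-(θ₁ + θ₂) / 2) : ℂ) * Complex.I) * Z γ).re
      = (Complex.exp ((↑(-(θ₁ + θ₂) / 2) : ℂ) * Complex.I) * Z p1).re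
      + (Complex.exp ((↑(-(θ₁ + θ₂) / 2) : ℂ) * Complex.I) * Z p2).re := by
    rw [← hadd, mul_add, Complex.add_re]
  have h1b : c * ‖Z p1‖ ≤ ‖Z γ‖ := by
    nlinarith [norm_nonneg (Z p2)]
  have hsup1 : m * ‖(fun t => (p1 t : ℝ))‖ ≤ ‖Z p1‖ := by
    have := hsup (fun t => (p1 t : ℝ)) h1Q
    rwa [hZR] at this
  have hnorm : ‖(fun t => (p1 t : ℝ))‖ ≤ K := by
    rw [hK, le_div_iff₀ (by positivity)]
    nlinarith [norm_nonneg (fun t => (p1 t : ℝ))]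
  refine ⟨p1, ?_, ?_⟩
  · intro t _
    have hle' : ‖(p1 t : ℝ)‖ ≤ ‖(fun t => (p1 t : ℝ))‖ :=
      norm_le_pi_norm (fun t => (p1 t : ℝ)) t
    have habs : |(p1 t : ℝ)| ≤ K := by
      rw [← Real.norm_eq_abs]; exact le_trans hle' hnorm
    obtain ⟨hlo, hhi⟩ := abs_le.mp habs
    have hceil : K ≤ (⌈K⌉ : ℝ) := Int.le_ceil K
    constructor
    · have h : ((-⌈K⌉ : ℤ) : ℝ) ≤ (p1 t : ℝ) := by push_cast; linarith
      exact_mod_cast h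
    · have h : ((p1 t : ℝ)) ≤ ((⌈K⌉ : ℤ) : ℝ) := by linarith
      exact_mod_cast h
  · have : p2 = γ - p1 := by rw [← hsum]; abel
    rw [this]
end
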